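/- Fix integers k ≥ 0, n ≥ 1 and distinct points x = (x₁,x₂), y = (y₁,y₂) in ℤ². If |x₁ − y₁| < n − 2k and |x₂ − y₂| < n − 2k, then π_n(B_{ℤ²}[x,k] ∩ B_{ℤ²}[y,k]) = π_n(B_{ℤ²}[x,k]) ∩ π_n(B_{ℤ²}[y,k]). -/
import Mathlib


/-- The ℓ¹ metric on `ℤ × ℤ`. -/
def dZ2 (x y : ℤ × ℤ) : ℤ := |x.1 - y.1| + |x.2 - y.2|

/-- The quotient map `π_n : ℤ² → ℤ²/G_n`, where `G_n = nℤ × nℤ` and the quotient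
is realized as `ZMod n × ZMod n`. -/
def proj (n : ℕ) (x : ℤ × ℤ) : ZMod n × ZMod n := ((x.1 : ZMod n), (x.2 : ZMod n))

/-- The closed ball `B_{ℤ²}[x, k]` in `ℤ²` with the ℓ¹ metric. -/
def ballZ2 (x : ℤ × ℤ) (k : ℤ) : Set (ℤ × ℤ) := {z | dZ2 x z ≤ k}

lemma coord_eq (n : ℕ) (a b : ℤ) (h : (a : ZMod n) = (b : ZMod n))
    (hdist : |a - b| < (n : ℤ)) : a = b := by
  have hdvd : (n : ℤ) ∣ a - b := by
    have := (ZMod.intCast_eq_intCast_iff' a b n).mp h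
    exact Int.ModEq.dvd this.symm
  have := Int.eq_zero_of_abs_lt_dvd hdvd hdist
  linarith

theorem stmt7 (k : ℤ) (n : ℕ) (hk : 0 ≤ k) (hn : 1 ≤ n)
    (x y : ℤ × ℤ) (hxy : x ≠ y)
    (h1 : |x.1 - y.1| < (n : ℤ) - 2 * k) (h2 : |x.2 - y.2| < (n : ℤ) - 2 * k) :
    proj n '' (ballZ2 x k ∩ ballZ2 y k)
      = proj n '' ballZ2 x k ∩ proj n '' ballZ2 y k := by
  apply Set.Subset.antisymm
  · exact Set.image_inter_subset _ _ _
  · rintro z ⟨⟨a, ha, rfl⟩, ⟨b, hb, hab⟩⟩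
    have ha1 : |x.1 - a.1| ≤ k := by
      have h0 : (0:ℤ) ≤ |x.2 - a.2| := abs_nonneg _
      have := ha; unfold ballZ2 dZ2 at this; simp only [Set.mem_setOf_eq] at this; linarith
    have ha2 : |x.2 - a.2| ≤ k := by
      have h0 : (0:ℤ) ≤ |x.1 - a.1| := abs_nonneg _
      have := ha; unfold ballZ2 dZ2 at this; simp only [Set.mem_setOf_eq] at this; linarith
    have hb1 : |y.1 - b.1| ≤ k := by
      have h0 : (0:ℤ) ≤ |y.2 - b.2| := abs_nonneg _
      have := hb; unfold ballZ2 dZ2 at this; simp only [Set.mem_setOf_eq] at this; linarith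
    have hb2 : |y.2 - b.2| ≤ k := by
      have h0 : (0:ℤ) ≤ |y.1 - b.1| := abs_nonneg _
      have := hb; unfold ballZ2 dZ2 at this; simp only [Set.mem_setOf_eq] at this; linarith
    have hproj : (a.1 : ZMod n) = (b.1 : ZMod n) ∧ (a.2 : ZMod n) = (b.2 : ZMod n) := by
      unfold proj at hab
      exact ⟨congrArg Prod.fst hab.symm, congrArg Prod.snd hab.symm⟩
    have d1 : |a.1 - b.1| < (n : ℤ) := by
      have t1 : |a.1 - b.1| ≤ |a.1 - x.1| + |x.1 - y.1| + |y.1 - b.1| := by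
        calc |a.1 - b.1| ≤ |a.1 - y.1| + |y.1 - b.1| := abs_sub_le _ _ _
          _ ≤ |a.1 - x.1| + |x.1 - y.1| + |y.1 - b.1| := by
              have := abs_sub_le a.1 x.1 y.1; linarith
      rw [abs_sub_comm a.1 x.1] at t1
      linarith
    have d2 : |a.2 - b.2| < (n : ℤ) := by
      have t1 : |a.2 - b.2| ≤ |a.2 - x.2| + |x.2 - y.2| + |y.2 - b.2| := by
        calc |a.2 - b.2| ≤ |a.2 - y.2| + |y.2 - b.2| := abs_sub_le _ _ _
          _ ≤ |a.2 - x.2| + |x.2 - y.2| + |y.2 - b.2| := by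
              have := abs_sub_le a.2 x.2 y.2; linarith
      rw [abs_sub_comm a.2 x.2] at t1
      linarith
    have e1 : a.1 = b.1 := coord_eq n _ _ hproj.1 d1
    have e2 : a.2 = b.2 := coord_eq n _ _ hproj.2 d2
    have hab' : a = b := Prod.ext e1 e2
    exact ⟨a, ⟨ha, hab' ▸ hb⟩, rfl⟩
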